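/- Let y₃ > 0 and f ∈ ℝ³, with y^I and f^I the images. Define φ^{GD}(x) = ê₃·(Q(x,y^I)f^I) where Q(x,y) = ∇_x G^D(x,y), and u^{GD}(x) = x₃∇_xφ^{GD}(x) − φ^{GD}(x)ê₃. Then the field u(x) = Q(x,y)f − Q(x,y^I)f^I − 2u^{GD}(x) vanishes for all x with x₃ = 0, x ∉ {y, y^I}. -/

import Mathlib

noncomputable section
open scoped Real

/-- Points in ℝ³ with the Euclidean norm. -/
abbrev E3 := EuclideanSpace ℝ (Fin 3)

/-- Build a point of ℝ³ from three coordinates. -/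
def mk3 (a b c : ℝ) : E3 := (WithLp.equiv 2 (Fin 3 → ℝ)).symm ![a, b, c]

/-- Partial derivative in the i-th coordinate direction. -/
def pd (i : Fin 3) (f : E3 → ℝ) (x : E3) : ℝ :=
  fderiv ℝ f x (EuclideanSpace.single i 1)

/-- Laplacian. -/
def lap (f : E3 → ℝ) (x : E3) : ℝ := ∑ i : Fin 3, pd i (pd i f) x

/-- Laplace monopole kernel G^S(x,y) = 1/(4π‖x−y‖). -/
def GS (x y : E3) : ℝ := 1 / (4 * Real.pi * ‖x - y‖)

/-- Laplace dipole kernel G^D(x,y) = (x−y)/(4π‖x−y‖³), j-th component. -/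
def GD (x y : E3) (j : Fin 3) : ℝ := (x j - y j) / (4 * Real.pi * ‖x - y‖ ^ 3)

/-- Stokeslet (unit viscosity), (i,j) entry. -/
def J (x y : E3) (i j : Fin 3) : ℝ :=
  (1 / (8 * Real.pi)) *
    ((if i = j then (1 : ℝ) else 0) / ‖x - y‖ +
      (x i - y i) * (x j - y j) / ‖x - y‖ ^ 3)

/-- Q(x,y) = ∇ₓ G^D(x,y), entries Q_{ij} = ∂_{x_i} G^D_j. -/
def Q (x y : E3) (i j : Fin 3) : ℝ := pd i (fun x => GD x y j) x

/-- Image point below the wall x₃ = 0. -/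
def yI (y : E3) : E3 := mk3 (y 0) (y 1) (-(y 2))

/-- Image force. -/
def fI (f : Fin 3 → ℝ) : Fin 3 → ℝ := ![f 0, f 1, -(f 2)]

/-- The potential φ^{GD} = ê₃·(Q(x,yᴵ)fᴵ) for the image of the Stokeslet Laplacian. -/
def phiGD (y : E3) (f : Fin 3 → ℝ) (x : E3) : ℝ :=
  ∑ j : Fin 3, Q x (yI y) 2 j * fI f j

lemma rpow_neg_half (r : ℝ) (hr : 0 < r) (n : ℕ) :
    ((r ^ 2 : ℝ)) ^ (-(n : ℝ) / 2) = (r ^ n)⁻¹ := by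
  have h2 : (r : ℝ) ^ (2 : ℕ) = r ^ ((2 : ℕ) : ℝ) := (Real.rpow_natCast r 2).symm
  rw [h2, ← Real.rpow_natCast r n, ← Real.rpow_neg hr.le,
    ← Real.rpow_mul hr.le]
  congr 1
  push_cast
  ring

lemma GD_eq (y : E3) (j : Fin 3) :
    (fun x : E3 => GD x y j) =
      fun x : E3 => (4 * Real.pi)⁻¹ * ((x j - y j) * (‖x - y‖ ^ 2) ^ (-(3 : ℝ) / 2)) := by
  funext x
  unfold GD
  rcases eq_or_ne x y with rfl | hxy
  · simp
  · have hr : 0 < ‖x - y‖ := by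
      simpa [sub_eq_zero] using norm_pos_iff.mpr (sub_ne_zero.mpr hxy)
    have h3 : ((‖x - y‖ ^ 2 : ℝ)) ^ (-(3 : ℝ) / 2) = (‖x - y‖ ^ 3)⁻¹ := by
      rw [show (-(3 : ℝ) / 2) = (-(3 : ℕ) : ℝ) / 2 by norm_num]
      exact rpow_neg_half _ hr 3
    rw [h3]
    field_simp

lemma Q_eq (x y : E3) (hxy : x ≠ y) (i j : Fin 3) :
    Q x y i j = (if i = j then (1 : ℝ) else 0) / (4 * Real.pi * ‖x - y‖ ^ 3)
      - 3 * (x i - y i) * (x j - y j) / (4 * Real.pi * ‖x - y‖ ^ 5) := by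
  have hr : 0 < ‖x - y‖ := norm_sub_pos_iff.mpr hxy
  have hn2 : (‖x - y‖ ^ 2 : ℝ) ≠ 0 := by positivity
  -- derivative of ‖x - y‖^2
  have h1 : HasFDerivAt (fun x' : E3 => x' - y) (ContinuousLinearMap.id ℝ E3) x :=
    (hasFDerivAt_id x).sub_const y
  have h2 : HasFDerivAt (fun x' : E3 => ‖x' - y‖ ^ 2)
      (2 • ((innerSL ℝ (x - y)).comp (ContinuousLinearMap.id ℝ E3))) x := h1.norm_sq
  have h3 := h2.rpow_const (p := -(3 : ℝ) / 2) (Or.inl hn2)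
  have h4 : HasFDerivAt (fun x' : E3 => x' j - y j)
      ((EuclideanSpace.proj j : E3 →L[ℝ] ℝ)) x := by
    simpa using (EuclideanSpace.proj j : E3 →L[ℝ] ℝ).hasFDerivAt.sub_const (y j)
  have h5 := h4.mul h3
  have h6 : HasFDerivAt (fun x' : E3 => (4 * Real.pi)⁻¹ * ((x' j - y j) * (‖x' - y‖ ^ 2) ^ (-(3 : ℝ) / 2))) _ x :=
    h5.const_mul ((4 * Real.pi)⁻¹)
  rw [Q, pd, GD_eq y j, h6.fderiv]
  have hsingle : ((EuclideanSpace.proj j : E3 →L[ℝ] ℝ)) (EuclideanSpace.single i 1)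
      = if i = j then (1 : ℝ) else 0 := by
    simp [PiLp.proj_apply, EuclideanSpace.single_apply]
    by_cases h : i = j <;> simp [h, eq_comm]
  have hinner : (innerSL ℝ (x - y)) (EuclideanSpace.single i 1) = x i - y i := by
    simp [innerSL_apply_apply, real_inner_comm, EuclideanSpace.inner_single_right]
  have hp1 : ((‖x - y‖ ^ 2 : ℝ)) ^ (-(3 : ℝ) / 2) = (‖x - y‖ ^ 3)⁻¹ := by
    rw [show (-(3 : ℝ) / 2) = (-(3 : ℕ) : ℝ) / 2 by norm_num]
    exact rpow_neg_half _ hr 3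
  have hp2 : ((‖x - y‖ ^ 2 : ℝ)) ^ (-(3 : ℝ) / 2 - 1) = (‖x - y‖ ^ 5)⁻¹ := by
    rw [show (-(3 : ℝ) / 2 - 1) = (-(5 : ℕ) : ℝ) / 2 by norm_num]
    exact rpow_neg_half _ hr 5
  simp only [ContinuousLinearMap.smul_apply, ContinuousLinearMap.add_apply,
    ContinuousLinearMap.comp_apply, ContinuousLinearMap.coe_smul', Pi.smul_apply,
    ContinuousLinearMap.coe_id', id_eq, ContinuousLinearMap.smul_apply,
    smul_eq_mul, hsingle, hinner, hp1, hp2]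
  have hpi : Real.pi ≠ 0 := Real.pi_ne_zero
  have hr' : ‖x - y‖ ≠ 0 := ne_of_gt hr
  by_cases h : i = j <;> simp [h] <;> field_simp <;> ring

lemma yI_apply (y : E3) : yI y 0 = y 0 ∧ yI y 1 = y 1 ∧ yI y 2 = -(y 2) := by
  refine ⟨?_, ?_, ?_⟩ <;> simp [yI, mk3, WithLp.equiv] <;> rfl

/-- The image system for the Laplacian of the Stokeslet vanishes on the wall x₃ = 0. -/
theorem stmt13 (y : E3) (hy : y 2 > 0) (f : Fin 3 → ℝ) :
    ∀ x : E3, x 2 = 0 → x ≠ y → x ≠ yI y →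
      ∀ i : Fin 3,
        (∑ j : Fin 3, Q x y i j * f j) - (∑ j : Fin 3, Q x (yI y) i j * fI f j)
          - 2 * (x 2 * pd i (phiGD y f) x
              - phiGD y f x * (if i = 2 then (1 : ℝ) else 0)) = 0 := by
  intro x hx2 hxy hxyI i
  obtain ⟨hI0, hI1, hI2⟩ := yI_apply y
  have hnorm : ‖x - yI y‖ = ‖x - y‖ := by
    rw [EuclideanSpace.norm_eq, EuclideanSpace.norm_eq]
    congr 1
    rw [Fin.sum_univ_three, Fin.sum_univ_three]
    simp only [PiLp.sub_apply, hI0, hI1, hI2, hx2, zero_sub, norm_neg, neg_neg]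
  set r := ‖x - y‖ with hr_def
  have hr : 0 < r := norm_sub_pos_iff.mpr hxy
  have hr' : r ≠ 0 := ne_of_gt hr
  have hpi : Real.pi ≠ 0 := Real.pi_ne_zero
  have hQ1 : ∀ i' j, Q x y i' j = (if i' = j then (1 : ℝ) else 0) / (4 * Real.pi * r ^ 3)
      - 3 * (x i' - y i') * (x j - y j) / (4 * Real.pi * r ^ 5) :=
    fun i' j => Q_eq x y hxy i' j
  have hQ2 : ∀ i' j, Q x (yI y) i' j = (if i' = j then (1 : ℝ) else 0) / (4 * Real.pi * r ^ 3)
      - 3 * (x i' - yI y i') * (x j - yI y j) / (4 * Real.pi * r ^ 5) := by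
    intro i' j
    rw [Q_eq x (yI y) hxyI i' j, hnorm]
  simp only [hI0, hI1, hI2] at hQ2
  have hphi : phiGD y f x =
      ∑ j : Fin 3, Q x (yI y) 2 j * fI f j := rfl
  rw [hx2]
  simp only [zero_mul, zero_sub, mul_neg, sub_neg_eq_add]
  rw [hphi]
  simp only [hQ1, hQ2]
  rw [Fin.sum_univ_three, Fin.sum_univ_three, Fin.sum_univ_three]
  simp only [hI0, hI1, hI2, hx2, fI, Matrix.cons_val_zero, Matrix.cons_val_one,
    Matrix.head_cons, Matrix.cons_val_two, Matrix.tail_cons]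
  fin_cases i <;> simp [hI0, hI1, hI2] <;> field_simp <;> ring
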